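/- Let X, Y be differentiable functions of a satisfying the system (VI_{ν,n}): aX′ = νX − (1−X²)μ_{ν+1} and aY′ = −(ν+1)Y + (1−Y²)μ_ν, where μ_ν = (2na/(1−a²))(X+aY)/(1+aXY) and μ_{ν+1} = (2na/(1−a²))(aX+Y)/(1+aXY). Set b = a², q = a(aX+Y)/(X+aY), T = 1/(1+aXY). Then dq/db = (2n + ν + (ν+1)b)/(b(b−1)) · q − ((ν+n)q² + (ν+1+n)b)/(b(b−1)) + 2nqT/b. -/
import Mathlib


/-- `q = a(aX+Y)/(X+aY)`. -/
noncomputable def qfun (X Y : ℝ → ℝ) : ℝ → ℝ := fun a => a * (a * X a + Y a) / (X a + a * Y a)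

/-- `T = 1/(1+aXY)`. -/
noncomputable def Tfun (X Y : ℝ → ℝ) : ℝ → ℝ := fun a => (1 + a * X a * Y a)⁻¹

theorem q_derivative_equation (ν : ℝ) (n : ℕ) (hn : 0 < n) (X Y : ℝ → ℝ) (U : Set ℝ)
    (hUopen : IsOpen U) (hUsub : U ⊆ Set.Ioo (0 : ℝ) 1)
    (hX : ∀ a ∈ U, DifferentiableAt ℝ X a) (hY : ∀ a ∈ U, DifferentiableAt ℝ Y a)
    (hden : ∀ a ∈ U, 1 + a * X a * Y a ≠ 0)
    (hden' : ∀ a ∈ U, X a + a * Y a ≠ 0)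
    (heqX : ∀ a ∈ U, a * deriv X a
        = ν * X a - (1 - X a ^ 2) * (2 * (n : ℝ) * a / (1 - a ^ 2))
            * (a * X a + Y a) / (1 + a * X a * Y a))
    (heqY : ∀ a ∈ U, a * deriv Y a
        = -(ν + 1) * Y a + (1 - Y a ^ 2) * (2 * (n : ℝ) * a / (1 - a ^ 2))
            * (X a + a * Y a) / (1 + a * X a * Y a)) :
    ∀ a ∈ U, (1 / (2 * a)) * deriv (qfun X Y) a
      = (2 * (n : ℝ) + ν + (ν + 1) * a ^ 2) / (a ^ 2 * (a ^ 2 - 1)) * qfun X Y a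
        - ((ν + (n : ℝ)) * (qfun X Y a) ^ 2 + (ν + 1 + (n : ℝ)) * a ^ 2)
            / (a ^ 2 * (a ^ 2 - 1))
        + 2 * (n : ℝ) * qfun X Y a * Tfun X Y a / a ^ 2 := by
  intro a ha
  obtain ⟨ha0, ha1⟩ := hUsub ha
  have hane : a ≠ 0 := ne_of_gt ha0
  have h1 : (1 : ℝ) - a ^ 2 ≠ 0 := by nlinarith
  have h1' : a ^ 2 - 1 ≠ 0 := by intro h; apply h1; linarith
  have ha2 : a ^ 2 ≠ 0 := pow_ne_zero 2 hane
  have hd1 := hden a ha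
  have hd2 := hden' a ha
  have hX' : HasDerivAt X (deriv X a) a := (hX a ha).hasDerivAt
  have hY' : HasDerivAt Y (deriv Y a) a := (hY a ha).hasDerivAt
  have hnum : HasDerivAt (fun t => t * (t * X t + Y t))
      (1 * (a * X a + Y a) + a * ((1 * X a + a * deriv X a) + deriv Y a)) a :=
    (hasDerivAt_id a).mul (((hasDerivAt_id a).mul hX').add hY')
  have hdenf : HasDerivAt (fun t => X t + t * Y t)
      (deriv X a + (1 * Y a + a * deriv Y a)) a :=
    hX'.add ((hasDerivAt_id a).mul hY')
  have hq : HasDerivAt (qfun X Y)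
      (((1 * (a * X a + Y a) + a * ((1 * X a + a * deriv X a) + deriv Y a)) * (X a + a * Y a)
        - (a * (a * X a + Y a)) * (deriv X a + (1 * Y a + a * deriv Y a)))
        / (X a + a * Y a) ^ 2) a := hnum.div hdenf hd2
  have hx' : deriv X a
      = (ν * X a - (1 - X a ^ 2) * (2 * (n : ℝ) * a / (1 - a ^ 2))
          * (a * X a + Y a) / (1 + a * X a * Y a)) / a := by
    rw [eq_div_iff hane, mul_comm]; exact heqX a ha
  have hy' : deriv Y a
      = (-(ν + 1) * Y a + (1 - Y a ^ 2) * (2 * (n : ℝ) * a / (1 - a ^ 2))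
          * (X a + a * Y a) / (1 + a * X a * Y a)) / a := by
    rw [eq_div_iff hane, mul_comm]; exact heqY a ha
  rw [hq.deriv, hx', hy', qfun, Tfun]
  field_simp
  ring
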